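/- Let N = 2n with n ≥ 1 and let U be the orthonormal eigenvector matrix of the Laplacian of the N-cycle, with eigenvector entries u_k(n') = sin(π(k+1)n'/N)/√(N/2) for odd k < N-1, u_k(n') = cos(πkn'/N)/√(N/2) for even k > 0, u_0(n') = 1/√N, and u_{N-1}(n') = cos(πn')/√N. Let δ = Uᵀ Δy₁ with Δy₁ = (1,-1,1,-1,…,1,-1)ᵀ and δ' = Uᵀ Δy₂ with Δy₂ = (1,1,…,1)ᵀ. Then δ_i = δ'_i for all 1 ≤ i ≤ N-2, while δ'_0 - δ_0 = √N and δ_{N-1} - δ'_{N-1} = √N. -/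

import Mathlib

open Real

lemma pow_exp_eq (θ : ℝ) (k : ℕ) :
    (Complex.exp ((θ:ℂ) * Complex.I))^k = Complex.exp ((((k:ℝ) * θ : ℝ):ℂ) * Complex.I) := by
  rw [← Complex.exp_nat_mul]
  push_cast
  ring_nf

lemma sum_exp_zero (N a : ℕ) (ha0 : 0 < a) (ha2 : a < 2*N) (hev : Even a) :
    ∑ k ∈ Finset.range N, (Complex.exp ((((a : ℝ) * π / N : ℝ):ℂ) * Complex.I))^k = 0 := by
  have hN : 0 < N := by omega
  set θ : ℝ := (a : ℝ) * π / N with hθ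
  have hne : Complex.exp ((θ:ℂ) * Complex.I) ≠ 1 := by
    rw [Ne, Complex.exp_eq_one_iff]
    rintro ⟨m, hm⟩
    have : (θ : ℂ) = (m : ℂ) * (2 * π) := by
      have h2 : (θ:ℂ) * Complex.I = ((m:ℂ) * (2 * π)) * Complex.I := by rw [hm]; ring
      exact mul_right_cancel₀ Complex.I_ne_zero h2
    have hre : θ = m * (2 * π) := by exact_mod_cast this
    have hpos : 0 < θ := by positivity
    have hlt : θ < 2 * π := by
      rw [hθ, div_lt_iff₀ (by positivity)]
      calc (a:ℝ) * π < (2*N:ℕ) * π := by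
            apply mul_lt_mul_of_pos_right _ pi_pos
            exact_mod_cast ha2
        _ = 2 * π * N := by push_cast; ring
    rcases lt_trichotomy m 0 with h | h | h
    · nlinarith [pi_pos, (by exact_mod_cast (by omega : m ≤ -1) : (m:ℝ) ≤ -1)]
    · simp [h] at hre; linarith
    · have : (1:ℝ) ≤ m := by exact_mod_cast h
      nlinarith [pi_pos]
  rw [geom_sum_eq hne]
  obtain ⟨b, hb⟩ := hev
  have hpow : (Complex.exp ((θ:ℂ) * Complex.I))^N = 1 := by
    rw [← Complex.exp_nat_mul, Complex.exp_eq_one_iff]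
    refine ⟨b, ?_⟩
    have hNc : (N : ℂ) ≠ 0 := by exact_mod_cast hN.ne'
    have h1 : ((N:ℂ)) * ((θ:ℂ) * Complex.I) = (a : ℂ) * π * Complex.I := by
      push_cast [hθ]
      field_simp
    rw [h1]
    have : (a : ℂ) = 2 * b := by exact_mod_cast (by omega : a = 2 * b)
    rw [this]
    push_cast
    ring
  rw [hpow]
  simp

lemma sum_cos_zero (N a : ℕ) (ha0 : 0 < a) (ha2 : a < 2*N) (hev : Even a) :
    ∑ k ∈ Finset.range N, Real.cos ((k : ℝ) * ((a : ℝ) * π / N)) = 0 := by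
  have h := congrArg Complex.re (sum_exp_zero N a ha0 ha2 hev)
  rw [Complex.re_sum] at h
  simp only [pow_exp_eq, Complex.exp_ofReal_mul_I_re] at h
  simpa using h

lemma sum_sin_zero (N a : ℕ) (ha0 : 0 < a) (ha2 : a < 2*N) (hev : Even a) :
    ∑ k ∈ Finset.range N, Real.sin ((k : ℝ) * ((a : ℝ) * π / N)) = 0 := by
  have h := congrArg Complex.im (sum_exp_zero N a ha0 ha2 hev)
  rw [Complex.im_sum] at h
  simp only [pow_exp_eq, Complex.exp_ofReal_mul_I_im] at h
  simpa using h

lemma cos_nat_pi (k : ℕ) : Real.cos ((k:ℝ) * π) = (-1)^k := by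
  simpa using Real.cos_nat_mul_pi_sub 0 k
theorem ring_graph_spectra_agree {n : ℕ} (hn : 1 ≤ n) (N : ℕ) (hN : N = 2 * n)
    (u : Fin N → Fin N → ℝ)
    (hu : ∀ k n' : Fin N,
      u k n' =
        if (k : ℕ) = 0 then 1 / Real.sqrt N
        else if (k : ℕ) = N - 1 then Real.cos (π * (n' : ℕ)) / Real.sqrt N
        else if Odd (k : ℕ) then
          Real.sin (π * ((k : ℕ) + 1) * (n' : ℕ) / N) / Real.sqrt (N / 2)
        else Real.cos (π * (k : ℕ) * (n' : ℕ) / N) / Real.sqrt (N / 2))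
    (Δy₁ Δy₂ : Fin N → ℝ)
    (hΔy₁ : ∀ i : Fin N, Δy₁ i = (-1 : ℝ) ^ (i : ℕ))
    (hΔy₂ : ∀ i : Fin N, Δy₂ i = 1)
    (δ δ' : Fin N → ℝ)
    (hδ : ∀ i, δ i = ∑ n', u i n' * Δy₁ n')
    (hδ' : ∀ i, δ' i = ∑ n', u i n' * Δy₂ n')
    (i0 iN : Fin N) (hi0 : (i0 : ℕ) = 0) (hiN : (iN : ℕ) = N - 1) :
    (∀ i : Fin N, 1 ≤ (i : ℕ) → (i : ℕ) ≤ N - 2 → δ i = δ' i) ∧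
    δ' i0 - δ i0 = Real.sqrt N ∧
    δ iN - δ' iN = Real.sqrt N := by
  have hN2 : 2 ≤ N := by omega
  have hNev : Even N := ⟨n, by omega⟩
  have hN0 : (N : ℝ) ≠ 0 := by positivity
  have hsqrtN : Real.sqrt N ≠ 0 := by positivity
  refine ⟨?_, ?_, ?_⟩
  · intro i h1 h2
    have hi0' : (i : ℕ) ≠ 0 := by omega
    have hiN' : (i : ℕ) ≠ N - 1 := by have := i.isLt; omega
    have hilt : (i : ℕ) < N := i.isLt
    rw [hδ i, hδ' i]
    simp only [hu, hΔy₁, hΔy₂, if_neg hi0', if_neg hiN', mul_one]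
    by_cases hodd : Odd (i : ℕ)
    · simp only [if_pos hodd]
      have key1 : ∑ n' : Fin N,
          Real.sin (π * ((i : ℕ) + 1) * (n' : ℕ) / N) * (-1 : ℝ) ^ (n' : ℕ) = 0 := by
        rw [Fin.sum_univ_eq_sum_range
          (fun k => Real.sin (π * ((i : ℕ) + 1) * (k : ℕ) / N) * (-1 : ℝ) ^ k)]
        rw [← sum_sin_zero N ((i : ℕ) + 1 + N) (by omega) (by omega)
          ((Odd.add_one hodd).add hNev)]
        apply Finset.sum_congr rfl
        intro k _
        have hang : (k : ℝ) * ((((i : ℕ) + 1 + N : ℕ) : ℝ) * π / N)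
            = π * ((i : ℕ) + 1) * k / N + k * π := by
          push_cast; field_simp
        rw [hang, Real.sin_add, Real.sin_nat_mul_pi, cos_nat_pi]
        ring
      have key2 : ∑ n' : Fin N, Real.sin (π * ((i : ℕ) + 1) * (n' : ℕ) / N) = 0 := by
        rw [Fin.sum_univ_eq_sum_range (fun k => Real.sin (π * ((i : ℕ) + 1) * (k : ℕ) / N))]
        rw [← sum_sin_zero N ((i : ℕ) + 1) (by omega) (by omega) (Odd.add_one hodd)]
        apply Finset.sum_congr rfl
        intro k _
        congr 1
        push_cast; field_simp
      calc ∑ n' : Fin N, Real.sin (π * ((i : ℕ) + 1) * (n' : ℕ) / N) / Real.sqrt (N / 2)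
            * (-1 : ℝ) ^ (n' : ℕ)
          = (∑ n' : Fin N, Real.sin (π * ((i : ℕ) + 1) * (n' : ℕ) / N) * (-1 : ℝ) ^ (n' : ℕ))
            / Real.sqrt (N / 2) := by
            rw [Finset.sum_div]; exact Finset.sum_congr rfl fun k _ => by ring
        _ = 0 := by rw [key1, zero_div]
        _ = (∑ n' : Fin N, Real.sin (π * ((i : ℕ) + 1) * (n' : ℕ) / N)) / Real.sqrt (N / 2) := by
            rw [key2, zero_div]
        _ = ∑ n' : Fin N, Real.sin (π * ((i : ℕ) + 1) * (n' : ℕ) / N) / Real.sqrt (N / 2) := by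
            rw [Finset.sum_div]
    · simp only [if_neg hodd]
      have hev : Even (i : ℕ) := Nat.not_odd_iff_even.1 hodd
      have key1 : ∑ n' : Fin N,
          Real.cos (π * (i : ℕ) * (n' : ℕ) / N) * (-1 : ℝ) ^ (n' : ℕ) = 0 := by
        rw [Fin.sum_univ_eq_sum_range
          (fun k => Real.cos (π * (i : ℕ) * (k : ℕ) / N) * (-1 : ℝ) ^ k)]
        rw [← sum_cos_zero N ((i : ℕ) + N) (by omega) (by omega) (hev.add hNev)]
        apply Finset.sum_congr rfl
        intro k _
        have hang : (k : ℝ) * ((((i : ℕ) + N : ℕ) : ℝ) * π / N)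
            = π * (i : ℕ) * k / N + k * π := by
          push_cast; field_simp
        rw [hang, Real.cos_add, Real.sin_nat_mul_pi, cos_nat_pi]
        ring
      have key2 : ∑ n' : Fin N, Real.cos (π * (i : ℕ) * (n' : ℕ) / N) = 0 := by
        rw [Fin.sum_univ_eq_sum_range (fun k => Real.cos (π * (i : ℕ) * (k : ℕ) / N))]
        rw [← sum_cos_zero N (i : ℕ) (by omega) (by omega) hev]
        apply Finset.sum_congr rfl
        intro k _
        congr 1
        push_cast; field_simp
      calc ∑ n' : Fin N, Real.cos (π * (i : ℕ) * (n' : ℕ) / N) / Real.sqrt (N / 2)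
            * (-1 : ℝ) ^ (n' : ℕ)
          = (∑ n' : Fin N, Real.cos (π * (i : ℕ) * (n' : ℕ) / N) * (-1 : ℝ) ^ (n' : ℕ))
            / Real.sqrt (N / 2) := by
            rw [Finset.sum_div]; exact Finset.sum_congr rfl fun k _ => by ring
        _ = 0 := by rw [key1, zero_div]
        _ = (∑ n' : Fin N, Real.cos (π * (i : ℕ) * (n' : ℕ) / N)) / Real.sqrt (N / 2) := by
            rw [key2, zero_div]
        _ = ∑ n' : Fin N, Real.cos (π * (i : ℕ) * (n' : ℕ) / N) / Real.sqrt (N / 2) := by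
            rw [Finset.sum_div]
  · rw [hδ' i0, hδ i0]
    simp only [hu, hΔy₁, hΔy₂, hi0, eq_self_iff_true, if_true, mul_one]
    have h1 : ∑ _n' : Fin N, 1 / Real.sqrt N = Real.sqrt N := by
      rw [Finset.sum_const, Finset.card_univ, Fintype.card_fin, nsmul_eq_mul]
      rw [mul_one_div, Real.div_sqrt]
    have h2 : ∑ n' : Fin N, 1 / Real.sqrt N * (-1 : ℝ) ^ (n' : ℕ) = 0 := by
      rw [← Finset.mul_sum, Fin.sum_univ_eq_sum_range (fun k => (-1 : ℝ) ^ k)]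
      rw [neg_one_geom_sum, if_pos hNev, mul_zero]
    rw [h1, h2, sub_zero]
  · rw [hδ iN, hδ' iN]
    have hNe : N - 1 ≠ 0 := by omega
    simp only [hu, hΔy₁, hΔy₂, hiN, if_neg hNe, eq_self_iff_true, if_true, mul_one]
    have hc : ∀ k : ℕ, Real.cos (π * (k : ℝ)) = (-1 : ℝ) ^ k := by
      intro k; rw [mul_comm]; exact cos_nat_pi k
    have h1 : ∑ n' : Fin N, Real.cos (π * ((n' : ℕ) : ℝ)) / Real.sqrt N * (-1 : ℝ) ^ (n' : ℕ)
        = Real.sqrt N := by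
      have : ∀ n' : Fin N, Real.cos (π * ((n' : ℕ) : ℝ)) / Real.sqrt N * (-1 : ℝ) ^ (n' : ℕ)
          = 1 / Real.sqrt N := by
        intro n'
        rw [hc]
        rw [div_mul_eq_mul_div, ← pow_add, ← two_mul, pow_mul, neg_one_sq, one_pow]
      rw [Finset.sum_congr rfl fun n' _ => this n']
      rw [Finset.sum_const, Finset.card_univ, Fintype.card_fin, nsmul_eq_mul]
      rw [mul_one_div, Real.div_sqrt]
    have h2 : ∑ n' : Fin N, Real.cos (π * ((n' : ℕ) : ℝ)) / Real.sqrt N = 0 := by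
      have : ∀ n' : Fin N, Real.cos (π * ((n' : ℕ) : ℝ)) / Real.sqrt N
          = 1 / Real.sqrt N * (-1 : ℝ) ^ (n' : ℕ) := by
        intro n'; rw [hc]; ring
      rw [Finset.sum_congr rfl fun n' _ => this n']
      rw [← Finset.mul_sum, Fin.sum_univ_eq_sum_range (fun k => (-1 : ℝ) ^ k)]
      rw [neg_one_geom_sum, if_pos hNev, mul_zero]
    rw [h1, h2, sub_zero]
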